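/- Let S and T be compact subsets of ℝ^p and ℝ^q, and let C ∈ S₂(L²(S × T)) be an integral operator with symmetric continuous kernel c. Then for every ε > 0 there exists an operator C′ = Σ_{n=1}^N A_n ⊗̃ B_n, where A_n and B_n are finite-rank integral operators on L²(S) and L²(T) with continuous kernels, such that ‖C − C′‖₂ ≤ ε and sup_{s,s′,t,t′} |c(s,t,s′,t′) − c′(s,t,s′,t′)| ≤ ε, where c′ is the kernel of C′. -/

import Mathlib

open scoped InnerProductSpace
noncomputable section

def hsInner {ι E : Type*} [NormedAddCommGroup E] [InnerProductSpace ℝ E]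
    (b : HilbertBasis ι ℝ E) (A B : E →L[ℝ] E) : ℝ :=
  ∑' i, ⟪A (b i), B (b i)⟫_ℝ

/-- Hilbert–Schmidt norm. -/
def hsNorm {ι E : Type*} [NormedAddCommGroup E] [InnerProductSpace ℝ E]
    (b : HilbertBasis ι ℝ E) (A : E →L[ℝ] E) : ℝ :=
  Real.sqrt (hsInner b A A)

/-- Being a Hilbert–Schmidt operator. -/
def IsHS {ι E : Type*} [NormedAddCommGroup E] [InnerProductSpace ℝ E]
    (b : HilbertBasis ι ℝ E) (A : E →L[ℝ] E) : Prop :=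
  Summable fun i => ‖A (b i)‖ ^ 2

/-- A realization of the Hilbert space `H` as the Hilbert tensor product `H₁ ⊗ H₂`,
together with the operator tensor product `⊗̃`: `tmul` is bilinear with
`⟪u ⊗ v, w ⊗ z⟫ = ⟪u,w⟫⟪v,z⟫`, elementary tensors span a dense subspace, and
`otimes C₁ C₂` is the bounded operator with `(C₁ ⊗̃ C₂)(u ⊗ v) = C₁ u ⊗ C₂ v`. -/
structure HilbertTensorProduct (H₁ H₂ H : Type*) [NormedAddCommGroup H₁]
    [InnerProductSpace ℝ H₁] [NormedAddCommGroup H₂] [InnerProductSpace ℝ H₂]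
    [NormedAddCommGroup H] [InnerProductSpace ℝ H] : Type _ where
  tmul : H₁ →ₗ[ℝ] H₂ →ₗ[ℝ] H
  inner_tmul : ∀ (u w : H₁) (v z : H₂),
    ⟪tmul u v, tmul w z⟫_ℝ = ⟪u, w⟫_ℝ * ⟪v, z⟫_ℝ
  dense_span : (Submodule.span ℝ
    (Set.range fun p : H₁ × H₂ => tmul p.1 p.2)).topologicalClosure = ⊤
  otimes : (H₁ →L[ℝ] H₁) → (H₂ →L[ℝ] H₂) → (H →L[ℝ] H)
  otimes_tmul : ∀ (C₁ : H₁ →L[ℝ] H₁) (C₂ : H₂ →L[ℝ] H₂) (u : H₁) (v : H₂),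
    otimes C₁ C₂ (tmul u v) = tmul (C₁ u) (C₂ v)

variable {ι₁ ι₂ κ H₁ H₂ H : Type*}
variable [NormedAddCommGroup H₁] [InnerProductSpace ℝ H₁] [CompleteSpace H₁]
variable [NormedAddCommGroup H₂] [InnerProductSpace ℝ H₂] [CompleteSpace H₂]
variable [NormedAddCommGroup H] [InnerProductSpace ℝ H] [CompleteSpace H]

open MeasureTheory

/-- The Lebesgue measure restricted to a subset of `ℝ^n`. -/
def restVol {n : ℕ} (S : Set (EuclideanSpace ℝ (Fin n))) :
    Measure (EuclideanSpace ℝ (Fin n)) :=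
  (volume : Measure (EuclideanSpace ℝ (Fin n))).restrict S

set_option linter.unusedSectionVars false
set_option linter.unusedVariables false
set_option maxHeartbeats 1000000
set_option synthInstance.maxHeartbeats 1000000

section AuxiliaryLemmas
open scoped Pointwise

lemma exists_tensor_approx {E F : Type*} [MetricSpace E] [MetricSpace F]
    {S : Set E} {T : Set F} (hS : IsCompact S) (hT : IsCompact T)
    (c : (E × F) → (E × F) → ℝ)
    (hc : Continuous fun x : (E × F) × (E × F) => c x.1 x.2)
    (ε : ℝ) (hε : 0 < ε) :
    ∃ (N : ℕ) (u v : Fin N → E → ℝ) (w z : Fin N → F → ℝ),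
      (∀ n, Continuous (u n)) ∧ (∀ n, Continuous (v n)) ∧
      (∀ n, Continuous (w n)) ∧ (∀ n, Continuous (z n)) ∧
      ∀ s ∈ S, ∀ t ∈ T, ∀ s' ∈ S, ∀ t' ∈ T,
        |c (s, t) (s', t') - ∑ n, u n s * v n s' * w n t * z n t'| ≤ ε := by
  classical
  set K : Set ((E × F) × (E × F)) := (S ×ˢ T) ×ˢ (S ×ˢ T) with hK
  haveI : CompactSpace K := isCompact_iff_compactSpace.mp ((hS.prod hT).prod (hS.prod hT))
  -- generators
  let gen : C(E, ℝ) → C(E, ℝ) → C(F, ℝ) → C(F, ℝ) → C(K, ℝ) := fun u v w z =>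
    ⟨fun x => u x.val.1.1 * v x.val.2.1 * w x.val.1.2 * z x.val.2.2, by fun_prop⟩
  let G : Set C(K, ℝ) := {g | ∃ u v w z, g = gen u v w z}
  have hone : (1 : C(K, ℝ)) ∈ G := ⟨1, 1, 1, 1, by ext x; simp [gen]⟩
  have hGmul : G * G ⊆ G := by
    rintro _ ⟨g₁, ⟨u₁, v₁, w₁, z₁, rfl⟩, g₂, ⟨u₂, v₂, w₂, z₂, rfl⟩, rfl⟩
    exact ⟨u₁ * u₂, v₁ * v₂, w₁ * w₂, z₁ * z₂, by ext x; simp [gen]; ring⟩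
  let M : Submodule ℝ C(K, ℝ) := Submodule.span ℝ G
  have hmul : ∀ x y : C(K, ℝ), x ∈ M → y ∈ M → x * y ∈ M := by
    intro x y hx hy
    have : M * M ≤ M := by
      rw [Submodule.span_mul_span]
      exact Submodule.span_mono hGmul
    exact this (Submodule.mul_mem_mul hx hy)
  let Alg : Subalgebra ℝ C(K, ℝ) := M.toSubalgebra (Submodule.subset_span hone) hmul
  have hsep : Alg.SeparatesPoints := by
    intro x y hxy
    have hv : x.val ≠ y.val := fun h => hxy (Subtype.ext h)
    have main : ∀ u v w z, (gen u v w z) x ≠ (gen u v w z) y →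
        ∃ f ∈ (fun f : C(K, ℝ) => (f : K → ℝ)) '' (Alg : Set C(K, ℝ)), f x ≠ f y := by
      intro u v w z h
      exact ⟨gen u v w z, ⟨gen u v w z,
        Submodule.subset_span ⟨u, v, w, z, rfl⟩, rfl⟩, h⟩
    by_cases h1 : x.val.1.1 = y.val.1.1
    · by_cases h2 : x.val.2.1 = y.val.2.1
      · by_cases h3 : x.val.1.2 = y.val.1.2
        · by_cases h4 : x.val.2.2 = y.val.2.2
          · exact absurd (Prod.ext (Prod.ext h1 h3) (Prod.ext h2 h4)) hv
          · refine main 1 1 1 ⟨fun a => dist a x.val.2.2, by fun_prop⟩ ?_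
            simp [gen, dist_eq_zero]
            exact fun h => h4 h.symm
        · refine main 1 1 ⟨fun a => dist a x.val.1.2, by fun_prop⟩ 1 ?_
          simp [gen, dist_eq_zero]
          exact fun h => h3 h.symm
      · refine main 1 ⟨fun a => dist a x.val.2.1, by fun_prop⟩ 1 1 ?_
        simp [gen, dist_eq_zero]
        exact fun h => h2 h.symm
    · refine main ⟨fun a => dist a x.val.1.1, by fun_prop⟩ 1 1 1 ?_
      simp [gen, dist_eq_zero]
      exact fun h => h1 h.symm
  -- the restricted kernel
  let cK : C(K, ℝ) := ⟨fun x => c x.val.1 x.val.2, by fun_prop⟩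
  obtain ⟨g, hg⟩ := ContinuousMap.exists_mem_subalgebra_near_continuousMap_of_separatesPoints
    Alg hsep cK ε hε
  have hgM : (g : C(K, ℝ)) ∈ M := g.2
  obtain ⟨n, f, vf, hsum⟩ := Submodule.mem_span_set'.mp hgM
  have hcomp : ∀ i, ∃ u v w z, (vf i : C(K, ℝ)) = gen u v w z := fun i => (vf i).2
  choose U V W Z hUVWZ using hcomp
  refine ⟨n, fun i a => f i * U i a, fun i => V i, fun i => W i, fun i => Z i,
    fun i => (continuous_const.mul (U i).continuous), fun i => (V i).continuous,
    fun i => (W i).continuous, fun i => (Z i).continuous, ?_⟩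
  intro s hs t ht s' hs' t' ht'
  have hxK : ((s, t), (s', t')) ∈ K := ⟨⟨hs, ht⟩, ⟨hs', ht'⟩⟩
  set x : K := ⟨((s, t), (s', t')), hxK⟩
  have hval : ∑ i, (fun a => f i * U i a) s * V i s' * W i t * Z i t'
      = (g : C(K, ℝ)) x := by
    rw [← hsum]
    rw [ContinuousMap.sum_apply]
    refine Finset.sum_congr rfl fun i _ => ?_
    rw [ContinuousMap.smul_apply, hUVWZ i]
    simp [gen, x]
    ring
  rw [hval]
  have := ContinuousMap.norm_coe_le_norm ((g : C(K, ℝ)) - cK) x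
  have hlt : ‖(g : C(K, ℝ)) - cK‖ < ε := hg
  have : |(g : C(K, ℝ)) x - cK x| ≤ ‖(g : C(K, ℝ)) - cK‖ := by
    simpa [Real.norm_eq_abs] using this
  have hcx : cK x = c (s, t) (s', t') := rfl
  rw [hcx] at this
  rw [abs_sub_comm]
  linarith

open scoped InnerProductSpace Pointwise
open MeasureTheory

section Helpers

variable {α : Type*} [MeasurableSpace α] [TopologicalSpace α] [OpensMeasurableSpace α]
  {σ : Measure α} [IsFiniteMeasure σ]

lemma memLp_of_cont {K : Set α} (hK : IsCompact K) (hσ : ∀ᵐ x ∂σ, x ∈ K)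
    {f : α → ℝ} (hf : Continuous f) (q : ENNReal) : MemLp f q σ := by
  obtain ⟨M, hM⟩ := hK.exists_bound_of_continuousOn hf.continuousOn
  exact MemLp.of_bound hf.aestronglyMeasurable M (hσ.mono fun x hx => hM x hx)

lemma integrable_L2 (f : Lp ℝ 2 σ) : Integrable f σ :=
  memLp_one_iff_integrable.mp ((Lp.memLp f).mono_exponent (by norm_num))

lemma integrable_cont_mul_L2 {K : Set α} (hK : IsCompact K) (hσ : ∀ᵐ x ∂σ, x ∈ K)
    {k : α → ℝ} (hk : Continuous k) (f : Lp ℝ 2 σ) :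
    Integrable (fun y => k y * f y) σ := by
  obtain ⟨M, hM⟩ := hK.exists_bound_of_continuousOn hk.continuousOn
  exact (integrable_L2 f).bdd_mul hk.aestronglyMeasurable (hσ.mono fun x hx => hM x hx)

lemma inner_toLp {f : α → ℝ} (hf : MemLp f 2 σ) (g : Lp ℝ 2 σ) :
    ⟪hf.toLp f, g⟫_ℝ = ∫ x, f x * g x ∂σ := by
  rw [L2.inner_def]
  refine integral_congr_ae ?_
  filter_upwards [hf.coeFn_toLp] with x hx
  simp [hx, RCLike.inner_apply]
  ring

lemma norm_sq_L2 (g : Lp ℝ 2 σ) : ‖g‖ ^ 2 = ∫ x, g x * g x ∂σ := by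
  rw [← real_inner_self_eq_norm_sq, L2.inner_def]
  refine integral_congr_ae (Filter.Eventually.of_forall fun x => ?_)
  simp [RCLike.inner_apply]
  ring

lemma Lp_coeFn_sum {ι : Type*} (s : Finset ι) (f : ι → Lp ℝ 2 σ) :
    ⇑(∑ i ∈ s, f i) =ᵐ[σ] fun x => ∑ i ∈ s, f i x := by
  classical
  induction s using Finset.induction_on with
  | empty => simp; exact Lp.coeFn_zero ℝ 2 σ
  | insert _ _ hnotmem ih =>
    rename_i i s
    rw [Finset.sum_insert hnotmem]
    filter_upwards [Lp.coeFn_add (f i) (∑ j ∈ s, f j), ih] with x h1 h2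
    rw [Finset.sum_insert hnotmem, h1, Pi.add_apply, h2]

end Helpers

section RankOne

variable {H' : Type*} [NormedAddCommGroup H'] [InnerProductSpace ℝ H']

/-- rank one operator `f ↦ ⟪v,f⟫ • u`. -/
def rankOne (u v : H') : H' →L[ℝ] H' := (innerSL ℝ v).smulRight u

lemma rankOne_apply (u v f : H') : rankOne u v f = ⟪v, f⟫_ℝ • u := rfl

lemma rankOne_fd (u v : H') :
    FiniteDimensional ℝ (LinearMap.range ((rankOne u v : H' →L[ℝ] H') : H' →ₗ[ℝ] H')) := by
  have hle : LinearMap.range ((rankOne u v : H' →L[ℝ] H') : H' →ₗ[ℝ] H') ≤ ℝ ∙ u := by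
    rintro x ⟨f, rfl⟩
    exact Submodule.smul_mem _ _ (Submodule.mem_span_singleton_self u)
  exact Submodule.finiteDimensional_of_le hle

end RankOne

end AuxiliaryLemmas

/-- a Hilbert–Schmidt integral operator `C` on `L²(S × T)` with symmetric
continuous kernel can be approximated, both in Hilbert–Schmidt norm and uniformly on the
level of kernels, by finite sums `Σ Aₙ ⊗̃ Bₙ` of tensor products of finite-rank integral
operators with continuous kernels. -/
theorem stmt14 {ι₁ ι₂ κ : Type*} {p q : ℕ}
    (S : Set (EuclideanSpace ℝ (Fin p))) (T : Set (EuclideanSpace ℝ (Fin q)))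
    (hScpt : IsCompact S) (hTcpt : IsCompact T)
    (P : HilbertTensorProduct (Lp ℝ 2 (restVol S)) (Lp ℝ 2 (restVol T))
      (Lp ℝ 2 ((restVol S).prod (restVol T))))
    (hP : ∀ (f : Lp ℝ 2 (restVol S)) (g : Lp ℝ 2 (restVol T)),
      (P.tmul f g : _ → ℝ) =ᵐ[(restVol S).prod (restVol T)] fun x => f x.1 * g x.2)
    (b : HilbertBasis κ ℝ (Lp ℝ 2 ((restVol S).prod (restVol T))))
    -- the symmetric continuous kernel `c` of the Hilbert–Schmidt operator `C`
    (c : (EuclideanSpace ℝ (Fin p) × EuclideanSpace ℝ (Fin q)) →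
      (EuclideanSpace ℝ (Fin p) × EuclideanSpace ℝ (Fin q)) → ℝ)
    (hcsym : ∀ x y, c x y = c y x)
    (hccont : Continuous fun x : (EuclideanSpace ℝ (Fin p) × EuclideanSpace ℝ (Fin q)) ×
      (EuclideanSpace ℝ (Fin p) × EuclideanSpace ℝ (Fin q)) => c x.1 x.2)
    (C : Lp ℝ 2 ((restVol S).prod (restVol T)) →L[ℝ] Lp ℝ 2 ((restVol S).prod (restVol T)))
    (hC : ∀ f, (C f : _ → ℝ) =ᵐ[(restVol S).prod (restVol T)]
      fun x => ∫ y, c x y * f y ∂((restVol S).prod (restVol T)))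
    (hCHS : IsHS b C)
    (ε : ℝ) (hε : 0 < ε) :
    ∃ (N : ℕ) (A : Fin N → (Lp ℝ 2 (restVol S) →L[ℝ] Lp ℝ 2 (restVol S)))
      (B : Fin N → (Lp ℝ 2 (restVol T) →L[ℝ] Lp ℝ 2 (restVol T)))
      (a : Fin N → EuclideanSpace ℝ (Fin p) → EuclideanSpace ℝ (Fin p) → ℝ)
      (bk : Fin N → EuclideanSpace ℝ (Fin q) → EuclideanSpace ℝ (Fin q) → ℝ),
      -- `Aₙ`, `Bₙ` are finite-rank integral operators with continuous kernels
      (∀ n, FiniteDimensional ℝ (LinearMap.range ((A n : Lp ℝ 2 (restVol S) →ₗ[ℝ]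
        Lp ℝ 2 (restVol S))))) ∧
      (∀ n, FiniteDimensional ℝ (LinearMap.range ((B n : Lp ℝ 2 (restVol T) →ₗ[ℝ]
        Lp ℝ 2 (restVol T))))) ∧
      (∀ n, Continuous fun x : EuclideanSpace ℝ (Fin p) × EuclideanSpace ℝ (Fin p) =>
        a n x.1 x.2) ∧
      (∀ n, Continuous fun x : EuclideanSpace ℝ (Fin q) × EuclideanSpace ℝ (Fin q) =>
        bk n x.1 x.2) ∧
      (∀ n, ∀ f, (A n f : _ → ℝ) =ᵐ[restVol S] fun s => ∫ s', a n s s' * f s' ∂(restVol S)) ∧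
      (∀ n, ∀ g, (B n g : _ → ℝ) =ᵐ[restVol T] fun t => ∫ t', bk n t t' * g t' ∂(restVol T)) ∧
      -- (a) Hilbert–Schmidt approximation
      hsNorm b (C - ∑ n, P.otimes (A n) (B n)) ≤ ε ∧
      -- (b) uniform approximation of the kernels
      (∀ s ∈ S, ∀ s' ∈ S, ∀ t ∈ T, ∀ t' ∈ T,
        |c (s, t) (s', t') - ∑ n, a n s s' * bk n t t'| ≤ ε) := by
  classical
  -- measurability and finiteness setup
  have hSm : MeasurableSet S := hScpt.isClosed.measurableSet
  have hTm : MeasurableSet T := hTcpt.isClosed.measurableSet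
  haveI hμfin : IsFiniteMeasure (restVol S) :=
    ⟨by rw [restVol, Measure.restrict_apply_univ]; exact hScpt.measure_lt_top⟩
  haveI hνfin : IsFiniteMeasure (restVol T) :=
    ⟨by rw [restVol, Measure.restrict_apply_univ]; exact hTcpt.measure_lt_top⟩
  have hμae : ∀ᵐ x ∂(restVol S), x ∈ S := ae_restrict_mem hSm
  have hνae : ∀ᵐ x ∂(restVol T), x ∈ T := ae_restrict_mem hTm
  have hSTcpt : IsCompact (S ×ˢ T) := hScpt.prod hTcpt
  have hρ_eq : (restVol S).prod (restVol T) = (volume.prod volume).restrict (S ×ˢ T) :=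
    Measure.prod_restrict S T
  have hρae : ∀ᵐ x ∂((restVol S).prod (restVol T)), x ∈ S ×ˢ T := by
    rw [hρ_eq]; exact ae_restrict_mem (hSm.prod hTm)
  set ρu := (((restVol S).prod (restVol T)) Set.univ).toReal with hρu_def
  have hρu0 : 0 ≤ ρu := ENNReal.toReal_nonneg
  set ε' := ε / (1 + ρu) with hε'def
  have hε' : 0 < ε' := div_pos hε (by linarith)
  have hε'le : ε' ≤ ε := div_le_self hε.le (by linarith)
  -- Stone–Weierstrass approximation of the kernel
  obtain ⟨N, u, v, w, z, hu_c, hv_c, hw_c, hz_c, key⟩ :=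
    exists_tensor_approx hScpt hTcpt c hccont ε' hε'
  set a : Fin N → EuclideanSpace ℝ (Fin p) → EuclideanSpace ℝ (Fin p) → ℝ :=
    fun n s s' => u n s * v n s' with ha_def
  set bk : Fin N → EuclideanSpace ℝ (Fin q) → EuclideanSpace ℝ (Fin q) → ℝ :=
    fun n t t' => w n t * z n t' with hbk_def
  -- the L² elements
  have huL : ∀ n, MemLp (u n) 2 (restVol S) := fun n => memLp_of_cont hScpt hμae (hu_c n) 2
  have hvL : ∀ n, MemLp (v n) 2 (restVol S) := fun n => memLp_of_cont hScpt hμae (hv_c n) 2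
  have hwL : ∀ n, MemLp (w n) 2 (restVol T) := fun n => memLp_of_cont hTcpt hνae (hw_c n) 2
  have hzL : ∀ n, MemLp (z n) 2 (restVol T) := fun n => memLp_of_cont hTcpt hνae (hz_c n) 2
  set uL : Fin N → Lp ℝ 2 (restVol S) := fun n => (huL n).toLp (u n) with huL_def
  set vL : Fin N → Lp ℝ 2 (restVol S) := fun n => (hvL n).toLp (v n) with hvL_def
  set wL : Fin N → Lp ℝ 2 (restVol T) := fun n => (hwL n).toLp (w n) with hwL_def
  set zL : Fin N → Lp ℝ 2 (restVol T) := fun n => (hzL n).toLp (z n) with hzL_def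
  set A : Fin N → (Lp ℝ 2 (restVol S) →L[ℝ] Lp ℝ 2 (restVol S)) :=
    fun n => rankOne (uL n) (vL n) with hA_def
  set B : Fin N → (Lp ℝ 2 (restVol T) →L[ℝ] Lp ℝ 2 (restVol T)) :=
    fun n => rankOne (wL n) (zL n) with hB_def
  -- integral representations of A and B
  have hAint : ∀ n, ∀ f : Lp ℝ 2 (restVol S),
      (A n f : _ → ℝ) =ᵐ[restVol S] fun s => ∫ s', a n s s' * f s' ∂(restVol S) := by
    intro n f
    have h1 : A n f = ⟪vL n, f⟫_ℝ • uL n := rfl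
    rw [h1]
    filter_upwards [Lp.coeFn_smul (⟪vL n, f⟫_ℝ) (uL n), (huL n).coeFn_toLp] with s h2 h3
    rw [h2, Pi.smul_apply, h3, smul_eq_mul, inner_toLp]
    have : ∀ s', a n s s' * f s' = u n s * (v n s' * f s') := by
      intro s'; rw [ha_def]; ring
    simp_rw [this]
    rw [integral_const_mul]
    ring
  have hBint : ∀ n, ∀ g : Lp ℝ 2 (restVol T),
      (B n g : _ → ℝ) =ᵐ[restVol T] fun t => ∫ t', bk n t t' * g t' ∂(restVol T) := by
    intro n g
    have h1 : B n g = ⟪zL n, g⟫_ℝ • wL n := rfl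
    rw [h1]
    filter_upwards [Lp.coeFn_smul (⟪zL n, g⟫_ℝ) (wL n), (hwL n).coeFn_toLp] with t h2 h3
    rw [h2, Pi.smul_apply, h3, smul_eq_mul, inner_toLp]
    have : ∀ t', bk n t t' * g t' = w n t * (z n t' * g t') := by
      intro t'; rw [hbk_def]; ring
    simp_rw [this]
    rw [integral_const_mul]
    ring
  refine ⟨N, A, B, a, bk, fun n => rankOne_fd _ _, fun n => rankOne_fd _ _,
    fun n => ((hu_c n).comp continuous_fst).mul ((hv_c n).comp continuous_snd),
    fun n => ((hw_c n).comp continuous_fst).mul ((hz_c n).comp continuous_snd),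
    hAint, hBint, ?_, ?_⟩
  · -- Hilbert–Schmidt bound
    set C' := ∑ n, P.otimes (A n) (B n) with hC'def
    -- `otimes` of rank-one operators is rank one
    have hotimes : ∀ n, P.otimes (A n) (B n)
        = rankOne (P.tmul (uL n) (wL n)) (P.tmul (vL n) (zL n)) := by
      intro n
      refine ContinuousLinearMap.ext_on
        (Submodule.dense_iff_topologicalClosure_eq_top.mpr P.dense_span) ?_
      rintro _ ⟨⟨f, g⟩, rfl⟩
      have hAf : A n f = ⟪vL n, f⟫_ℝ • uL n := rfl
      have hBg : B n g = ⟪zL n, g⟫_ℝ • wL n := rfl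
      show P.otimes (A n) (B n) (P.tmul f g) = rankOne _ _ (P.tmul f g)
      rw [P.otimes_tmul, hAf, hBg, P.tmul.map_smul, LinearMap.smul_apply,
        (P.tmul (uL n)).map_smul, smul_smul, rankOne_apply, P.inner_tmul]
    -- the kernels of the tensor factors
    set kfun : Fin N → (EuclideanSpace ℝ (Fin p) × EuclideanSpace ℝ (Fin q)) →
        (EuclideanSpace ℝ (Fin p) × EuclideanSpace ℝ (Fin q)) → ℝ :=
      fun n x y => a n x.1 y.1 * bk n x.2 y.2 with hkfun_def
    have hk_c : ∀ n, Continuous fun qq :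
        (EuclideanSpace ℝ (Fin p) × EuclideanSpace ℝ (Fin q)) ×
        (EuclideanSpace ℝ (Fin p) × EuclideanSpace ℝ (Fin q)) => kfun n qq.1 qq.2 := by
      intro n
      exact (((hu_c n).comp (continuous_fst.comp continuous_fst)).mul
          ((hv_c n).comp (continuous_fst.comp continuous_snd))).mul
        (((hw_c n).comp (continuous_snd.comp continuous_fst)).mul
          ((hz_c n).comp (continuous_snd.comp continuous_snd)))
    haveI hBorel : BorelSpace ((EuclideanSpace ℝ (Fin p) × EuclideanSpace ℝ (Fin q)) ×
        (EuclideanSpace ℝ (Fin p) × EuclideanSpace ℝ (Fin q))) := Prod.borelSpace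
    have hkx_c : ∀ n x, Continuous fun y => kfun n x y := fun n x =>
      (hk_c n).comp (continuous_const.prodMk continuous_id)
    have hcx_c : ∀ x, Continuous fun y => c x y := fun x =>
      hccont.comp (continuous_const.prodMk continuous_id)
    have hkx_int : ∀ n x (h : Lp ℝ 2 ((restVol S).prod (restVol T))),
        Integrable (fun y => kfun n x y * h y) ((restVol S).prod (restVol T)) :=
      fun n x h => integrable_cont_mul_L2 hSTcpt hρae (hkx_c n x) h
    have hsumx_c : ∀ x, Continuous fun y => ∑ n, kfun n x y := fun x =>
      continuous_finset_sum _ fun n _ => hkx_c n x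
    have hsumx_int : ∀ x (h : Lp ℝ 2 ((restVol S).prod (restVol T))),
        Integrable (fun y => (∑ n, kfun n x y) * h y) ((restVol S).prod (restVol T)) :=
      fun x h => integrable_cont_mul_L2 hSTcpt hρae (hsumx_c x) h
    have hcx_int : ∀ x (h : Lp ℝ 2 ((restVol S).prod (restVol T))),
        Integrable (fun y => c x y * h y) ((restVol S).prod (restVol T)) :=
      fun x h => integrable_cont_mul_L2 hSTcpt hρae (hcx_c x) h
    -- integral representation of each tensor factor
    have hRint : ∀ n, ∀ h : Lp ℝ 2 ((restVol S).prod (restVol T)),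
        ⇑(P.otimes (A n) (B n) h) =ᵐ[((restVol S).prod (restVol T))] fun x => ∫ y, kfun n x y * h y ∂((restVol S).prod (restVol T)) := by
      intro n h
      rw [hotimes n]
      have hr : rankOne (P.tmul (uL n) (wL n)) (P.tmul (vL n) (zL n)) h
          = ⟪P.tmul (vL n) (zL n), h⟫_ℝ • P.tmul (uL n) (wL n) := rfl
      rw [hr]
      have htm_u : ⇑(P.tmul (uL n) (wL n)) =ᵐ[((restVol S).prod (restVol T))] fun x => u n x.1 * w n x.2 := by
        have h2 := Measure.quasiMeasurePreserving_fst.ae_eq_comp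
          ((huL n).coeFn_toLp) (μ := ((restVol S).prod (restVol T)))
        have h3 := Measure.quasiMeasurePreserving_snd.ae_eq_comp
          ((hwL n).coeFn_toLp) (μ := ((restVol S).prod (restVol T)))
        filter_upwards [hP (uL n) (wL n), h2, h3] with x hx hx2 hx3
        rw [hx]
        simp only [Function.comp_apply] at hx2 hx3
        rw [hx2, hx3]
      have hinner : ⟪P.tmul (vL n) (zL n), h⟫_ℝ
          = ∫ y, v n y.1 * z n y.2 * h y ∂((restVol S).prod (restVol T)) := by
        rw [L2.inner_def]
        refine integral_congr_ae ?_
        have h2 := Measure.quasiMeasurePreserving_fst.ae_eq_comp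
          ((hvL n).coeFn_toLp) (μ := ((restVol S).prod (restVol T)))
        have h3 := Measure.quasiMeasurePreserving_snd.ae_eq_comp
          ((hzL n).coeFn_toLp) (μ := ((restVol S).prod (restVol T)))
        filter_upwards [hP (vL n) (zL n), h2, h3] with y hy hy2 hy3
        simp only [Function.comp_apply] at hy2 hy3
        simp [RCLike.inner_apply, hy, hy2, hy3]
        have e2 : (vL n : _ → ℝ) y.1 = v n y.1 := hy2
        have e3 : (zL n : _ → ℝ) y.2 = z n y.2 := hy3
        rw [e2, e3]; ring
      filter_upwards [Lp.coeFn_smul (⟪P.tmul (vL n) (zL n), h⟫_ℝ) (P.tmul (uL n) (wL n)),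
        htm_u] with x h1 h2
      rw [h1, Pi.smul_apply, h2, smul_eq_mul, hinner]
      have e : ∀ y, kfun n x y * h y
          = (u n x.1 * w n x.2) * (v n y.1 * z n y.2 * h y) := by
        intro y; simp only [hkfun_def, ha_def, hbk_def]; ring
      simp_rw [e]
      rw [integral_const_mul]
      ring
    -- integral representation of C'
    have hC'int : ∀ h : Lp ℝ 2 ((restVol S).prod (restVol T)),
        ⇑(C' h) =ᵐ[((restVol S).prod (restVol T))] fun x => ∫ y, (∑ n, kfun n x y) * h y ∂((restVol S).prod (restVol T)) := by
      intro h
      have h0 : C' h = ∑ n, (P.otimes (A n) (B n)) h := by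
        rw [hC'def]; exact ContinuousLinearMap.sum_apply _ _ _
      rw [h0]
      have hall : ∀ᵐ x ∂((restVol S).prod (restVol T)), ∀ n, (P.otimes (A n) (B n) h : _ → ℝ) x
          = ∫ y, kfun n x y * h y ∂((restVol S).prod (restVol T)) := ae_all_iff.mpr fun n => hRint n h
      filter_upwards [Lp_coeFn_sum Finset.univ (fun n => (P.otimes (A n) (B n)) h),
        hall] with x h1 h2
      rw [h1]
      rw [Finset.sum_congr rfl fun n _ => h2 n]
      rw [← integral_finset_sum _ (fun n _ => hkx_int n x h)]
      congr 1
      funext y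
      rw [Finset.sum_mul]
    -- integral representation of C - C'
    set d : (EuclideanSpace ℝ (Fin p) × EuclideanSpace ℝ (Fin q)) →
        (EuclideanSpace ℝ (Fin p) × EuclideanSpace ℝ (Fin q)) → ℝ :=
      fun x y => c x y - ∑ n, kfun n x y with hd_def
    have hd_c : Continuous fun qq :
        (EuclideanSpace ℝ (Fin p) × EuclideanSpace ℝ (Fin q)) ×
        (EuclideanSpace ℝ (Fin p) × EuclideanSpace ℝ (Fin q)) => d qq.1 qq.2 :=
      hccont.sub (continuous_finset_sum _ fun n _ => hk_c n)
    have hDint : ∀ h : Lp ℝ 2 ((restVol S).prod (restVol T)),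
        ⇑((C - C') h) =ᵐ[((restVol S).prod (restVol T))] fun x => ∫ y, d x y * h y ∂((restVol S).prod (restVol T)) := by
      intro h
      have h0 : (C - C') h = C h - C' h := rfl
      rw [h0]
      filter_upwards [Lp.coeFn_sub (C h) (C' h), hC h, hC'int h] with x h1 h2 h3
      rw [h1, Pi.sub_apply, h2, h3, ← integral_sub (hcx_int x h) (hsumx_int x h)]
      congr 1
      funext y
      simp only [hd_def]
      ring
    -- the kernel of C - C' is uniformly small on S × T
    have hdb : ∀ᵐ x ∂((restVol S).prod (restVol T)), ∀ᵐ y ∂((restVol S).prod (restVol T)), |d x y| ≤ ε' := by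
      filter_upwards [hρae] with x hx
      filter_upwards [hρae] with y hy
      have hkey := key x.1 hx.1 x.2 hx.2 y.1 hy.1 y.2 hy.2
      have e : d x y = c (x.1, x.2) (y.1, y.2)
          - ∑ n, u n x.1 * v n y.1 * w n x.2 * z n y.2 := by
        simp only [hd_def, hkfun_def, ha_def, hbk_def, Prod.mk.eta]
        congr 1
        exact Finset.sum_congr rfl fun n _ => by ring
      rw [e]
      exact hkey
    -- Bessel-type estimate
    have dm : ∀ x, MemLp (fun y => d x y) 2 ((restVol S).prod (restVol T)) := fun x =>
      memLp_of_cont hSTcpt hρae (hd_c.comp (continuous_const.prodMk continuous_id)) 2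
    set dLp : _ → Lp ℝ 2 ((restVol S).prod (restVol T)) := fun x => (dm x).toLp (fun y => d x y) with hdLp_def
    set φ : κ → _ → ℝ := fun i x => ∫ y, d x y * (b i) y ∂((restVol S).prod (restVol T)) with hφ_def
    have hφinner : ∀ i x, φ i x = ⟪dLp x, b i⟫_ℝ := fun i x =>
      (inner_toLp (dm x) (b i)).symm
    have hnormDbi : ∀ i, ‖(C - C') (b i)‖ ^ 2 = ∫ x, φ i x * φ i x ∂((restVol S).prod (restVol T)) := by
      intro i
      rw [norm_sq_L2]
      refine integral_congr_ae ?_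
      filter_upwards [hDint (b i)] with x hx
      rw [hx]
    have hnorm_dLp : ∀ x, ‖dLp x‖ ^ 2 = ∫ y, d x y * d x y ∂((restVol S).prod (restVol T)) := by
      intro x
      rw [norm_sq_L2]
      refine integral_congr_ae ?_
      filter_upwards [(dm x).coeFn_toLp] with y hy
      have hy' : (dLp x : _ → ℝ) y = d x y := hy
      rw [hy']
    have hbessel : ∀ (x) (Fs : Finset κ), ∑ i ∈ Fs, φ i x * φ i x ≤ ‖dLp x‖ ^ 2 := by
      intro x Fs
      refine le_trans (le_of_eq ?_) ((b.orthonormal).sum_inner_products_le (dLp x) (s := Fs))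
      refine Finset.sum_congr rfl fun i _ => ?_
      rw [hφinner, Real.norm_eq_abs, sq_abs, real_inner_comm (b i) (dLp x), sq]
    have hψle : ∀ᵐ x ∂((restVol S).prod (restVol T)), ‖dLp x‖ ^ 2 ≤ ε' ^ 2 * ρu := by
      filter_upwards [hdb] with x hx
      rw [hnorm_dLp]
      have hle : ∫ y, d x y * d x y ∂((restVol S).prod (restVol T)) ≤ ∫ _y, ε' ^ 2 ∂((restVol S).prod (restVol T)) := by
        refine integral_mono_of_nonneg (Filter.Eventually.of_forall fun y =>
          mul_self_nonneg _) (integrable_const _) ?_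
        filter_upwards [hx] with y hy
        calc d x y * d x y = |d x y| * |d x y| := (abs_mul_abs_self _).symm
          _ ≤ ε' * ε' := mul_le_mul hy hy (abs_nonneg _) hε'.le
          _ = ε' ^ 2 := (sq ε').symm
      rw [integral_const, smul_eq_mul] at hle
      calc ∫ y, d x y * d x y ∂((restVol S).prod (restVol T)) ≤ ρu * ε' ^ 2 := hle
        _ = ε' ^ 2 * ρu := mul_comm _ _
    have hφmeas : ∀ i, AEStronglyMeasurable (φ i) ((restVol S).prod (restVol T)) := by
      intro i
      have hf : AEStronglyMeasurable
          (fun qq : _ × _ => d qq.1 qq.2 * (b i) qq.2) (((restVol S).prod (restVol T)).prod ((restVol S).prod (restVol T))) :=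
        hd_c.aestronglyMeasurable.mul ((Lp.aestronglyMeasurable (b i)).comp_quasiMeasurePreserving
          Measure.quasiMeasurePreserving_snd)
      exact hf.integral_prod_right'
    have hφint : ∀ i, Integrable (fun x => φ i x * φ i x) ((restVol S).prod (restVol T)) := by
      intro i
      refine Integrable.mono' (integrable_const (ε' ^ 2 * ρu))
        ((hφmeas i).mul (hφmeas i)) ?_
      filter_upwards [hψle] with x hx
      have h1 : |φ i x| ≤ ‖dLp x‖ := by
        rw [hφinner]
        simpa [b.orthonormal.1 i] using abs_real_inner_le_norm (dLp x) (b i)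
      calc ‖φ i x * φ i x‖ = |φ i x| * |φ i x| := by rw [Real.norm_eq_abs, abs_mul]
        _ ≤ ‖dLp x‖ * ‖dLp x‖ :=
          mul_le_mul h1 h1 (abs_nonneg _) (norm_nonneg _)
        _ = ‖dLp x‖ ^ 2 := (sq _).symm
        _ ≤ ε' ^ 2 * ρu := hx
    -- finite partial sums are uniformly bounded
    have hFin : ∀ Fs : Finset κ,
        ∑ i ∈ Fs, ⟪(C - C') (b i), (C - C') (b i)⟫_ℝ ≤ ε' ^ 2 * ρu * ρu := by
      intro Fs
      have e1 : ∑ i ∈ Fs, ⟪(C - C') (b i), (C - C') (b i)⟫_ℝ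
          = ∑ i ∈ Fs, ∫ x, φ i x * φ i x ∂((restVol S).prod (restVol T)) := by
        refine Finset.sum_congr rfl fun i _ => ?_
        rw [real_inner_self_eq_norm_sq, hnormDbi i]
      rw [e1, ← integral_finset_sum Fs fun i _ => hφint i]
      have hle : ∫ x, (∑ i ∈ Fs, φ i x * φ i x) ∂((restVol S).prod (restVol T)) ≤ ∫ _x, ε' ^ 2 * ρu ∂((restVol S).prod (restVol T)) := by
        refine integral_mono_of_nonneg (Filter.Eventually.of_forall fun x =>
          Finset.sum_nonneg fun i _ => mul_self_nonneg _) (integrable_const _) ?_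
        filter_upwards [hψle] with x hx
        exact (hbessel x Fs).trans hx
      rw [integral_const, smul_eq_mul] at hle
      calc ∫ x, (∑ i ∈ Fs, φ i x * φ i x) ∂((restVol S).prod (restVol T)) ≤ ρu * (ε' ^ 2 * ρu) := hle
        _ = ε' ^ 2 * ρu * ρu := by ring
    -- conclude
    rw [hsNorm, hsInner]
    have htsum : (∑' i, ⟪(C - C') (b i), (C - C') (b i)⟫_ℝ) ≤ ε' ^ 2 * ρu * ρu :=
      tsum_le_of_sum_le' (by positivity) hFin
    refine (Real.sqrt_le_sqrt htsum).trans ?_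
    have e2 : ε' ^ 2 * ρu * ρu = (ε' * ρu) ^ 2 := by ring
    rw [e2, Real.sqrt_sq (by positivity)]
    rw [hε'def, div_mul_eq_mul_div, div_le_iff₀ (by linarith)]
    nlinarith
  · -- kernel bound
    intro s hs s' hs' t ht t' ht'
    have := key s hs t ht s' hs' t' ht'
    refine le_trans (le_of_eq ?_) (this.trans hε'le)
    congr 1
    congr 1
    exact Finset.sum_congr rfl fun n _ => by rw [ha_def, hbk_def]; ring
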